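/- Let Y be a real N×n matrix with YᵀY = Iₙ and let Δ be in the tangent space T_Y St (i.e. YᵀΔ + ΔᵀY = 0). Then the curve γ(t) = exp(t·Ω(Y,Δ))·Y satisfies the retraction properties γ(0) = Y and γ′(0) = Δ (the derivative of t ↦ exp(t·Ω(Y,Δ))·Y at t = 0 equals Δ). -/

import Mathlib

open Matrix

attribute [local instance] Matrix.linftyOpNormedRing Matrix.linftyOpNormedAlgebra

/-- The curve `γ(t) = exp(t·Ω(Y,Δ))·Y` satisfies the retraction properties `γ(0) = Y` and
`γ′(0) = Δ` (derivative taken entrywise in `t`), where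
`Ω(Y,Δ) = (I − ½YYᵀ)ΔYᵀ − YΔᵀ(I − ½YYᵀ)`. -/
theorem geodesic_retraction_properties (N n : ℕ) (Y Δ : Matrix (Fin N) (Fin n) ℝ)
    (hY : Yᵀ * Y = 1) (hΔ : Yᵀ * Δ + Δᵀ * Y = 0) :
    (NormedSpace.exp
        ((0 : ℝ) • ((1 - (2 : ℝ)⁻¹ • (Y * Yᵀ)) * Δ * Yᵀ
          - Y * Δᵀ * (1 - (2 : ℝ)⁻¹ • (Y * Yᵀ)))) * Y = Y) ∧
    ∀ (i : Fin N) (j : Fin n), HasDerivAt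
      (fun t : ℝ =>
        ((NormedSpace.exp
          (t • ((1 - (2 : ℝ)⁻¹ • (Y * Yᵀ)) * Δ * Yᵀ
            - Y * Δᵀ * (1 - (2 : ℝ)⁻¹ • (Y * Yᵀ)))) * Y : Matrix (Fin N) (Fin n) ℝ) i j))
      (Δ i j) 0 := by
  set Ω : Matrix (Fin N) (Fin N) ℝ :=
    (1 - (2 : ℝ)⁻¹ • (Y * Yᵀ)) * Δ * Yᵀ - Y * Δᵀ * (1 - (2 : ℝ)⁻¹ • (Y * Yᵀ)) with hΩ
  have hexp0 : NormedSpace.exp ((0 : ℝ) • Ω) = 1 := by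
    rw [zero_smul, NormedSpace.exp_zero]
  have hΩY : Ω * Y = Δ := by
    have h1 : (1 - (2 : ℝ)⁻¹ • (Y * Yᵀ)) * Δ * Yᵀ * Y
        = Δ - (2 : ℝ)⁻¹ • (Y * (Yᵀ * Δ)) := by
      rw [Matrix.mul_assoc, hY, Matrix.mul_one, Matrix.sub_mul, Matrix.one_mul,
        Matrix.smul_mul, Matrix.mul_assoc]
    have h2 : Y * Δᵀ * (1 - (2 : ℝ)⁻¹ • (Y * Yᵀ)) * Y
        = (2 : ℝ)⁻¹ • (Y * (Δᵀ * Y)) := by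
      rw [Matrix.mul_sub, Matrix.sub_mul, Matrix.mul_one, Matrix.mul_smul,
        Matrix.smul_mul, Matrix.mul_assoc (Y * Δᵀ), Matrix.mul_assoc Y Yᵀ, hY,
        Matrix.mul_one, Matrix.mul_assoc Y Δᵀ Y]
      module
    rw [hΩ, Matrix.sub_mul, h1, h2, sub_sub, ← smul_add, ← Matrix.mul_add, hΔ,
      Matrix.mul_zero, smul_zero, sub_zero]
  refine ⟨by rw [hexp0, Matrix.one_mul], fun i j => ?_⟩
  have hd : HasDerivAt (fun t : ℝ => NormedSpace.exp (t • Ω)) Ω 0 := by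
    have := hasDerivAt_exp_smul_const (𝕂 := ℝ) Ω 0
    rw [zero_smul, NormedSpace.exp_zero, one_mul] at this
    exact this
  have hentry : ∀ a b, HasDerivAt (fun t : ℝ => NormedSpace.exp (t • Ω) a b) (Ω a b) 0 := by
    intro a b
    let L : Matrix (Fin N) (Fin N) ℝ →L[ℝ] ℝ :=
      LinearMap.toContinuousLinearMap
        { toFun := fun M => M a b
          map_add' := fun _ _ => rfl
          map_smul' := fun _ _ => rfl }
    exact L.hasFDerivAt.comp_hasDerivAt 0 hd
  have hsum : HasDerivAt
      (fun t : ℝ => ∑ k, NormedSpace.exp (t • Ω) i k * Y k j)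
      (∑ k, Ω i k * Y k j) 0 :=
    HasDerivAt.fun_sum fun k _ => (hentry i k).mul_const (Y k j)
  have : (∑ k, Ω i k * Y k j) = Δ i j := by
    rw [← Matrix.mul_apply, hΩY]
  rw [this] at hsum
  convert hsum using 1
  funext t
  rfl
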